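/- Let ε > 0 and let p : ℕ → [0,1] satisfy n·p(n) ≤ (1−ε)·log n for all large n. Then the probability that the Erdős–Rényi random graph G(n, p(n)) contains at least one isolated vertex (a vertex with no neighbors) tends to 1 as n → ∞; in particular, with probability tending to 1, G(n, p(n)) is not connected. -/

import Mathlib

open scoped Classical

/-- The number of edges of a simple graph on `Fin n`. -/
noncomputable def edgeCount {n : ℕ} (g : SimpleGraph (Fin n)) : ℕ := g.edgeSet.ncard

/-- The probability, under the Erdős–Rényi model `G(n,p)` (each of the `C(n,2)` possible
edges present independently with probability `p`), of a set `E` of graphs on `[n]`. -/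
noncomputable def erProb (n : ℕ) (p : ℝ) (E : Set (SimpleGraph (Fin n))) : ℝ :=
  ∑ g ∈ Finset.univ.filter (fun g : SimpleGraph (Fin n) => g ∈ E),
    p ^ edgeCount g * (1 - p) ^ (n.choose 2 - edgeCount g)

namespace ERAux

abbrev ES (n : ℕ) := {e : Sym2 (Fin n) // ¬ e.IsDiag}

noncomputable def gr (n : ℕ) : SimpleGraph (Fin n) ≃ (ES n → Bool) where
  toFun g e := decide (e.1 ∈ g.edgeSet)
  invFun f := SimpleGraph.fromEdgeSet {e | ∃ h : ¬ e.IsDiag, f ⟨e, h⟩ = true}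
  left_inv g := by
    have hset : {e : Sym2 (Fin n) | ∃ h : ¬ e.IsDiag, decide (e ∈ g.edgeSet) = true}
        = g.edgeSet := by
      ext e
      simp only [Set.mem_setOf_eq, decide_eq_true_eq]
      exact ⟨fun ⟨h, he⟩ => he, fun he => ⟨g.not_isDiag_of_mem_edgeSet he, he⟩⟩
    simp only [hset, SimpleGraph.fromEdgeSet_edgeSet]
  right_inv f := by
    funext e
    have : ((↑e : Sym2 (Fin n)) ∈ (SimpleGraph.fromEdgeSet
        {e : Sym2 (Fin n) | ∃ h : ¬ e.IsDiag, f ⟨e, h⟩ = true}).edgeSet) ↔ f e = true := by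
      rw [SimpleGraph.edgeSet_fromEdgeSet]
      simp only [Set.mem_diff, Set.mem_setOf_eq]
      constructor
      · rintro ⟨⟨h, hf⟩, -⟩; simpa using hf
      · intro hf; exact ⟨⟨e.2, by simpa using hf⟩, e.2⟩
    dsimp only
    rw [decide_eq_decide.mpr this]
    · simp
    · infer_instance

noncomputable def wt (n : ℕ) (p : ℝ) (f : ES n → Bool) : ℝ :=
  ∏ e : ES n, (if f e then p else 1 - p)

lemma card_ES (n : ℕ) : Fintype.card (ES n) = n.choose 2 := by
  rw [Sym2.card_subtype_not_diag, Fintype.card_fin]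

lemma edgeCount_eq (n : ℕ) (g : SimpleGraph (Fin n)) :
    edgeCount g = (Finset.univ.filter (fun e : ES n => gr n g e = true)).card := by
  classical
  rw [edgeCount, Set.ncard_eq_toFinset_card' g.edgeSet]
  apply Finset.card_bij (fun (e : Sym2 (Fin n)) (he : e ∈ g.edgeSet.toFinset) =>
    (⟨e, g.not_isDiag_of_mem_edgeSet (Set.mem_toFinset.mp he)⟩ : ES n))
  · intro e he
    simp only [Finset.mem_filter, Finset.mem_univ, true_and, gr, Equiv.coe_fn_mk,
      decide_eq_true_eq]
    exact Set.mem_toFinset.mp he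
  · intro a ha b hb hab
    simpa using congrArg Subtype.val hab
  · intro e he
    simp only [Finset.mem_filter, Finset.mem_univ, true_and, gr, Equiv.coe_fn_mk,
      decide_eq_true_eq] at he
    exact ⟨e.1, Set.mem_toFinset.mpr he, rfl⟩

lemma wt_eq (n : ℕ) (p : ℝ) (g : SimpleGraph (Fin n)) :
    wt n p (gr n g) = p ^ edgeCount g * (1 - p) ^ (n.choose 2 - edgeCount g) := by
  classical
  rw [wt, Finset.prod_ite (fun _ => p) (fun _ => 1 - p), Finset.prod_const, Finset.prod_const]
  have h1 : (Finset.univ.filter (fun e : ES n => gr n g e = true)).card = edgeCount g :=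
    (edgeCount_eq n g).symm
  have h2 : (Finset.univ.filter (fun e : ES n => ¬ gr n g e = true)).card
      = n.choose 2 - edgeCount g := by
    have := Finset.card_filter_add_card_filter_not
      (s := (Finset.univ : Finset (ES n))) (p := fun e => gr n g e = true)
    rw [Finset.card_univ, card_ES] at this
    omega
  rw [h1, h2]

lemma erProb_eq (n : ℕ) (p : ℝ) (E : Set (SimpleGraph (Fin n))) :
    erProb n p E = ∑ f : ES n → Bool, (if (gr n).symm f ∈ E then wt n p f else 0) := by
  classical
  rw [erProb, Finset.sum_filter]
  exact Fintype.sum_equiv (gr n) _ _ (fun g => by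
    rw [Equiv.symm_apply_apply, wt_eq])

lemma sum_wt (n : ℕ) (p : ℝ) : ∑ f : ES n → Bool, wt n p f = 1 := by
  classical
  have h := Finset.prod_univ_sum (fun _ : ES n => (Finset.univ : Finset Bool))
    (fun _ b => if b then p else 1 - p)
  rw [Fintype.piFinset_univ] at h
  calc ∑ f : ES n → Bool, wt n p f
      = ∏ _e : ES n, ∑ b : Bool, (if b then p else 1 - p) := by exact h.symm
    _ = 1 := by simp

lemma sum_wt_restrict (n : ℕ) (p : ℝ) (T : Finset (ES n)) :
    ∑ f : ES n → Bool, (if ∀ e ∈ T, f e = false then wt n p f else 0)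
      = (1 - p) ^ T.card := by
  classical
  have key : ∀ f : ES n → Bool, (if ∀ e ∈ T, f e = false then wt n p f else 0)
      = ∏ e : ES n, (if e ∈ T then (if f e then 0 else 1 - p) else (if f e then p else 1 - p)) := by
    intro f
    by_cases hf : ∀ e ∈ T, f e = false
    · rw [if_pos hf, wt]
      apply Finset.prod_congr rfl
      intro e _
      by_cases he : e ∈ T
      · rw [if_pos he, hf e he]; simp
      · rw [if_neg he]
    · rw [if_neg hf]
      push_neg at hf
      obtain ⟨e0, he0, hfe0⟩ := hf
      rw [eq_comm]
      apply Finset.prod_eq_zero (Finset.mem_univ e0)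
      rw [if_pos he0, if_pos (by simpa using hfe0)]
  have h := Finset.prod_univ_sum (fun _ : ES n => (Finset.univ : Finset Bool))
    (fun e b => if e ∈ T then (if b then 0 else 1 - p) else (if b then p else 1 - p))
  rw [Fintype.piFinset_univ] at h
  have this2 : ∀ e : ES n, (∑ b : Bool,
      (if e ∈ T then (if b then 0 else 1 - p) else (if b then p else 1 - p)))
      = (if e ∈ T then (1 - p) else 1) := by
    intro e
    by_cases he : e ∈ T <;> simp [he]
  calc (∑ f : ES n → Bool, if ∀ e ∈ T, f e = false then wt n p f else 0)
      = ∑ f : ES n → Bool, ∏ e : ES n, (if e ∈ T then (if f e then 0 else 1 - p)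
          else (if f e then p else 1 - p)) := Finset.sum_congr rfl (fun f _ => key f)
    _ = ∏ e : ES n, ∑ b : Bool, (if e ∈ T then (if b then 0 else 1 - p)
          else (if b then p else 1 - p)) := by exact h.symm
    _ = ∏ e : ES n, (if e ∈ T then (1 - p) else 1) :=
          Finset.prod_congr rfl (fun e _ => this2 e)
    _ = (1 - p) ^ T.card := by
          rw [Finset.prod_ite_mem, Finset.univ_inter, Finset.prod_const]

noncomputable def Tv (n : ℕ) (v : Fin n) : Finset (ES n) :=
  Finset.univ.filter (fun e => v ∈ e.1)

lemma card_Tv (n : ℕ) (v : Fin n) : (Tv n v).card = n - 1 := by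
  classical
  have h : (Tv n v).card = (Finset.univ.erase v).card := by
    apply Finset.card_bij (fun (e : ES n) (he : e ∈ Tv n v) =>
      Sym2.Mem.other' (Finset.mem_filter.mp he).2)
    · intro e he
      have hv : v ∈ e.1 := (Finset.mem_filter.mp he).2
      refine Finset.mem_erase.mpr ⟨?_, Finset.mem_univ _⟩
      intro hvv
      apply e.2
      rw [← Sym2.other_spec' hv, hvv]
      exact Sym2.mk_isDiag_iff.mpr rfl
    · intro a ha b hb hab
      have hva : v ∈ a.1 := (Finset.mem_filter.mp ha).2
      have hvb : v ∈ b.1 := (Finset.mem_filter.mp hb).2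
      apply Subtype.ext
      rw [← Sym2.other_spec' hva, ← Sym2.other_spec' hvb, hab]
    · intro w hw
      have hwv : w ≠ v := (Finset.mem_erase.mp hw).1
      have hnd : ¬ (s(v, w) : Sym2 (Fin n)).IsDiag := by
        rw [Sym2.mk_isDiag_iff]
        exact fun hh => hwv hh.symm
      have hmem : (⟨s(v, w), hnd⟩ : ES n) ∈ Tv n v :=
        Finset.mem_filter.mpr ⟨Finset.mem_univ _, Sym2.mem_mk_left v w⟩
      refine ⟨⟨s(v, w), hnd⟩, hmem, ?_⟩
      have hsp := Sym2.other_spec' (Finset.mem_filter.mp hmem).2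
      exact Sym2.congr_right.mp hsp
  rw [h, Finset.card_erase_of_mem (Finset.mem_univ v), Finset.card_univ, Fintype.card_fin]

lemma sym2_eq_of_mem {α : Type*} {u v : α} (huv : u ≠ v) :
    ∀ z : Sym2 α, u ∈ z → v ∈ z → z = s(u, v) := by
  intro z
  induction z using Sym2.ind with
  | _ a b =>
    intro hu hv
    rw [Sym2.mem_iff] at hu hv
    rcases hu with rfl | rfl
    · rcases hv with rfl | rfl
      · exact absurd rfl huv
      · rfl
    · rcases hv with rfl | rfl
      · exact Sym2.eq_swap
      · exact absurd rfl huv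

lemma card_inter_le (n : ℕ) (u v : Fin n) (huv : u ≠ v) :
    (Tv n u ∩ Tv n v).card ≤ 1 := by
  apply Finset.card_le_one.mpr
  intro a ha b hb
  rw [Finset.mem_inter] at ha hb
  apply Subtype.ext
  rw [sym2_eq_of_mem huv a.1 (Finset.mem_filter.mp ha.1).2 (Finset.mem_filter.mp ha.2).2,
    sym2_eq_of_mem huv b.1 (Finset.mem_filter.mp hb.1).2 (Finset.mem_filter.mp hb.2).2]

lemma card_union_ge (n : ℕ) (u v : Fin n) (hn : 2 ≤ n) (huv : u ≠ v) :
    2 * n - 3 ≤ (Tv n u ∪ Tv n v).card := by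
  have h := Finset.card_union_add_card_inter (Tv n u) (Tv n v)
  have h2 := card_inter_le n u v huv
  rw [card_Tv, card_Tv] at h
  omega

lemma isolated_iff (n : ℕ) (g : SimpleGraph (Fin n)) (v : Fin n) :
    (∀ w, ¬ g.Adj v w) ↔ ∀ e ∈ Tv n v, gr n g e = false := by
  constructor
  · intro hiso e he
    have hv : v ∈ e.1 := (Finset.mem_filter.mp he).2
    have hne : e.1 ∉ g.edgeSet := by
      intro hmem
      apply hiso (Sym2.Mem.other' hv)
      rw [← SimpleGraph.mem_edgeSet, Sym2.other_spec' hv]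
      exact hmem
    simp only [gr, Equiv.coe_fn_mk, decide_eq_false_iff_not]
    exact hne
  · intro hf w hadj
    have hnd : ¬ (s(v, w) : Sym2 (Fin n)).IsDiag := by
      rw [Sym2.mk_isDiag_iff]
      exact g.ne_of_adj hadj
    have he : (⟨s(v, w), hnd⟩ : ES n) ∈ Tv n v :=
      Finset.mem_filter.mpr ⟨Finset.mem_univ _, Sym2.mem_mk_left v w⟩
    have := hf _ he
    simp only [gr, Equiv.coe_fn_mk, decide_eq_false_iff_not] at this
    exact this ((SimpleGraph.mem_edgeSet g).mpr hadj)

noncomputable def X (n : ℕ) (f : ES n → Bool) : ℝ :=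
  ∑ v : Fin n, (if ∀ e ∈ Tv n v, f e = false then 1 else 0)

lemma X_nonneg (n : ℕ) (f : ES n → Bool) : 0 ≤ X n f :=
  Finset.sum_nonneg fun v _ => by positivity

lemma first_moment (n : ℕ) (p : ℝ) :
    ∑ f : ES n → Bool, wt n p f * X n f = n * (1 - p) ^ (n - 1) := by
  simp_rw [X, Finset.mul_sum]
  rw [Finset.sum_comm]
  have key : ∀ v : Fin n,
      (∑ f : ES n → Bool, wt n p f * (if ∀ e ∈ Tv n v, f e = false then 1 else 0))
      = (1 - p) ^ (n - 1) := by
    intro v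
    have h := sum_wt_restrict n p (Tv n v)
    rw [card_Tv] at h
    rw [← h]
    apply Finset.sum_congr rfl
    intro f _
    by_cases hf : ∀ e ∈ Tv n v, f e = false <;> simp [hf]
  rw [Finset.sum_congr rfl (fun v _ => key v), Finset.sum_const, Finset.card_univ,
    Fintype.card_fin, nsmul_eq_mul]

lemma second_moment (n : ℕ) (p : ℝ) :
    ∑ f : ES n → Bool, wt n p f * (X n f) ^ 2
      = ∑ v : Fin n, ∑ u : Fin n, (1 - p) ^ (Tv n v ∪ Tv n u).card := by
  have expand : ∀ f : ES n → Bool, wt n p f * (X n f) ^ 2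
      = ∑ v : Fin n, ∑ u : Fin n,
        (if ∀ e ∈ Tv n v ∪ Tv n u, f e = false then wt n p f else 0) := by
    intro f
    rw [sq, X, Finset.sum_mul_sum]
    rw [Finset.mul_sum]
    apply Finset.sum_congr rfl
    intro v _
    rw [Finset.mul_sum]
    apply Finset.sum_congr rfl
    intro u _
    have : (∀ e ∈ Tv n v ∪ Tv n u, f e = false)
        ↔ ((∀ e ∈ Tv n v, f e = false) ∧ (∀ e ∈ Tv n u, f e = false)) := by
      constructor
      · intro hh
        exact ⟨fun e he => hh e (Finset.mem_union_left _ he),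
               fun e he => hh e (Finset.mem_union_right _ he)⟩
      · rintro ⟨h1, h2⟩ e he
        rcases Finset.mem_union.mp he with he | he
        · exact h1 e he
        · exact h2 e he
    by_cases h1 : ∀ e ∈ Tv n v, f e = false <;> by_cases h2 : ∀ e ∈ Tv n u, f e = false
    · rw [if_pos h1, if_pos h2, if_pos (this.mpr ⟨h1, h2⟩)]; ring
    · rw [if_pos h1, if_neg h2, if_neg (fun hc => h2 (this.mp hc).2)]; ring
    · rw [if_neg h1, if_pos h2, if_neg (fun hc => h1 (this.mp hc).1)]; ring
    · rw [if_neg h1, if_neg h2, if_neg (fun hc => h1 (this.mp hc).1)]; ring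
  rw [Finset.sum_congr rfl (fun f _ => expand f), Finset.sum_comm]
  apply Finset.sum_congr rfl
  intro v _
  rw [Finset.sum_comm]
  exact Finset.sum_congr rfl (fun u _ => sum_wt_restrict n p _)

lemma second_moment_le (n : ℕ) (p : ℝ) (hn : 2 ≤ n) (hp0 : 0 ≤ p) (hp1 : p ≤ 1) :
    ∑ f : ES n → Bool, wt n p f * (X n f) ^ 2
      ≤ (n : ℝ) * (1 - p) ^ (n - 1) + (n : ℝ) ^ 2 * (1 - p) ^ (2 * n - 3) := by
  rw [second_moment]
  have hq0 : (0 : ℝ) ≤ 1 - p := by linarith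
  have hq1 : (1 : ℝ) - p ≤ 1 := by linarith
  have bound : ∀ v : Fin n, (∑ u : Fin n, (1 - p) ^ (Tv n v ∪ Tv n u).card)
      ≤ (1 - p) ^ (n - 1) + (n : ℝ) * (1 - p) ^ (2 * n - 3) := by
    intro v
    rw [← Finset.add_sum_erase _ _ (Finset.mem_univ v)]
    have hdiag : (Tv n v ∪ Tv n v).card = n - 1 := by
      rw [Finset.union_self, card_Tv]
    rw [hdiag]
    gcongr ((1:ℝ) - p) ^ (n-1) + ?_
    calc (∑ u ∈ Finset.univ.erase v, (1 - p) ^ (Tv n v ∪ Tv n u).card)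
        ≤ ∑ u ∈ Finset.univ.erase v, (1 - p) ^ (2 * n - 3) := by
          apply Finset.sum_le_sum
          intro u hu
          exact pow_le_pow_of_le_one hq0 hq1
            (card_union_ge n v u hn (Ne.symm (Finset.mem_erase.mp hu).1))
      _ ≤ (n : ℝ) * (1 - p) ^ (2 * n - 3) := by
          rw [Finset.sum_const, nsmul_eq_mul]
          apply mul_le_mul_of_nonneg_right _ (by positivity)
          rw [Finset.card_erase_of_mem (Finset.mem_univ v), Finset.card_univ, Fintype.card_fin]
          exact_mod_cast Nat.sub_le n 1
  calc (∑ v : Fin n, ∑ u : Fin n, (1 - p) ^ (Tv n v ∪ Tv n u).card)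
      ≤ ∑ _v : Fin n, ((1 - p) ^ (n - 1) + (n : ℝ) * (1 - p) ^ (2 * n - 3)) :=
        Finset.sum_le_sum fun v _ => bound v
    _ = (n : ℝ) * (1 - p) ^ (n - 1) + (n : ℝ) ^ 2 * (1 - p) ^ (2 * n - 3) := by
        rw [Finset.sum_const, Finset.card_univ, Fintype.card_fin, nsmul_eq_mul]
        ring

lemma wt_nonneg (n : ℕ) (p : ℝ) (hp0 : 0 ≤ p) (hp1 : p ≤ 1) (f : ES n → Bool) :
    0 ≤ wt n p f :=
  Finset.prod_nonneg fun e _ => by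
    by_cases h : f e = true <;> simp [h] <;> linarith

lemma erProb_nonneg (n : ℕ) (p : ℝ) (hp0 : 0 ≤ p) (hp1 : p ≤ 1)
    (E : Set (SimpleGraph (Fin n))) : 0 ≤ erProb n p E := by
  apply Finset.sum_nonneg
  intro g _
  have : (0:ℝ) ≤ 1 - p := by linarith
  positivity

lemma erProb_le_one (n : ℕ) (p : ℝ) (hp0 : 0 ≤ p) (hp1 : p ≤ 1)
    (E : Set (SimpleGraph (Fin n))) : erProb n p E ≤ 1 := by
  rw [erProb_eq, ← sum_wt n p]
  apply Finset.sum_le_sum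
  intro f _
  by_cases hf : (gr n).symm f ∈ E
  · rw [if_pos hf]
  · rw [if_neg hf]; exact wt_nonneg n p hp0 hp1 f

lemma erProb_mono (n : ℕ) (p : ℝ) (hp0 : 0 ≤ p) (hp1 : p ≤ 1)
    {E F : Set (SimpleGraph (Fin n))} (hEF : E ⊆ F) : erProb n p E ≤ erProb n p F := by
  rw [erProb_eq, erProb_eq]
  apply Finset.sum_le_sum
  intro f _
  by_cases hf : (gr n).symm f ∈ E
  · rw [if_pos hf, if_pos (hEF hf)]
  · rw [if_neg hf]
    by_cases hg : (gr n).symm f ∈ F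
    · rw [if_pos hg]; exact wt_nonneg n p hp0 hp1 f
    · rw [if_neg hg]

lemma erProb_iso (n : ℕ) (p : ℝ) :
    erProb n p {g : SimpleGraph (Fin n) | ∃ v, ∀ w, ¬ g.Adj v w}
      = ∑ f : ES n → Bool,
          (if ∃ v, ∀ e ∈ Tv n v, f e = false then wt n p f else 0) := by
  rw [erProb_eq]
  apply Finset.sum_congr rfl
  intro f _
  have hc : ((gr n).symm f ∈ {g : SimpleGraph (Fin n) | ∃ v, ∀ w, ¬ g.Adj v w})
      ↔ (∃ v, ∀ e ∈ Tv n v, f e = false) := by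
    simp only [Set.mem_setOf_eq]
    apply exists_congr
    intro v
    rw [isolated_iff n _ v, Equiv.apply_symm_apply]
  simp only [hc]

lemma cauchy_schwarz_step (n : ℕ) (p : ℝ) (hp0 : 0 ≤ p) (hp1 : p ≤ 1) :
    ((n : ℝ) * (1 - p) ^ (n - 1)) ^ 2
      ≤ erProb n p {g : SimpleGraph (Fin n) | ∃ v, ∀ w, ¬ g.Adj v w}
        * ∑ f : ES n → Bool, wt n p f * (X n f) ^ 2 := by
  have hwt := wt_nonneg n p hp0 hp1
  set A := fun f : ES n → Bool => ∃ v, ∀ e ∈ Tv n v, f e = false with hA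
  have h1 : ∀ f : ES n → Bool,
      (Real.sqrt (wt n p f) * (if A f then 1 else 0)) * (Real.sqrt (wt n p f) * X n f)
        = wt n p f * X n f := by
    intro f
    by_cases hAf : A f
    · rw [if_pos hAf]
      rw [mul_one, ← mul_assoc, mul_comm (Real.sqrt (wt n p f) * Real.sqrt (wt n p f)),
        Real.mul_self_sqrt (hwt f)]
      ring
    · rw [if_neg hAf]
      have hX : X n f = 0 := by
        rw [X]
        apply Finset.sum_eq_zero
        intro v _
        exact if_neg (fun hv => hAf ⟨v, hv⟩)
      rw [hX]; ring
  have h2 : ∀ f : ES n → Bool,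
      (Real.sqrt (wt n p f) * (if A f then 1 else 0)) ^ 2
        = (if A f then wt n p f else 0) := by
    intro f
    by_cases hAf : A f
    · rw [if_pos hAf, if_pos hAf, mul_one, Real.sq_sqrt (hwt f)]
    · rw [if_neg hAf, if_neg hAf, mul_zero]; ring
  have h3 : ∀ f : ES n → Bool,
      (Real.sqrt (wt n p f) * X n f) ^ 2 = wt n p f * (X n f) ^ 2 := by
    intro f
    rw [mul_pow, Real.sq_sqrt (hwt f)]
  calc ((n : ℝ) * (1 - p) ^ (n - 1)) ^ 2
      = (∑ f : ES n → Bool, wt n p f * X n f) ^ 2 := by rw [first_moment]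
    _ = (∑ f : ES n → Bool,
          (Real.sqrt (wt n p f) * (if A f then 1 else 0))
            * (Real.sqrt (wt n p f) * X n f)) ^ 2 := by
        rw [Finset.sum_congr rfl (fun f _ => h1 f)]
    _ ≤ (∑ f : ES n → Bool, (Real.sqrt (wt n p f) * (if A f then 1 else 0)) ^ 2)
          * ∑ f : ES n → Bool, (Real.sqrt (wt n p f) * X n f) ^ 2 :=
        Finset.sum_mul_sq_le_sq_mul_sq _ _ _
    _ = erProb n p {g : SimpleGraph (Fin n) | ∃ v, ∀ w, ¬ g.Adj v w}
          * ∑ f : ES n → Bool, wt n p f * (X n f) ^ 2 := by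
        rw [Finset.sum_congr rfl (fun f _ => h2 f),
          Finset.sum_congr rfl (fun f _ => h3 f), erProb_iso]

lemma prob_iso_lower (n : ℕ) (p : ℝ) (hn : 2 ≤ n) (hp0 : 0 ≤ p) (hp1 : p ≤ 1) :
    ((n : ℝ) * (1 - p) ^ (n - 1)) ^ 2
      ≤ erProb n p {g : SimpleGraph (Fin n) | ∃ v, ∀ w, ¬ g.Adj v w}
        * ((n : ℝ) * (1 - p) ^ (n - 1) + (n : ℝ) ^ 2 * (1 - p) ^ (2 * n - 3)) := by
  refine le_trans (cauchy_schwarz_step n p hp0 hp1) ?_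
  exact mul_le_mul_of_nonneg_left (second_moment_le n p hn hp0 hp1)
    (erProb_nonneg n p hp0 hp1 _)

lemma iso_subset_notconn (n : ℕ) (hn : 2 ≤ n) :
    {g : SimpleGraph (Fin n) | ∃ v, ∀ w, ¬ g.Adj v w}
      ⊆ {g : SimpleGraph (Fin n) | ¬ g.Connected} := by
  rintro g ⟨v, hv⟩ hconn
  have : Nontrivial (Fin n) := Fin.nontrivial_iff_two_le.mpr hn
  obtain ⟨u, hu⟩ := exists_ne v
  obtain ⟨w⟩ := hconn.preconnected v u
  cases w with
  | nil => exact hu rfl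
  | cons h _ => exact hv _ h

end ERAux


lemma one_sub_ge_exp (p : ℝ) (hp0 : 0 ≤ p) (hp1 : p < 1) :
    Real.exp (-(p / (1 - p))) ≤ 1 - p := by
  have hq : 0 < 1 - p := by linarith
  have h := Real.add_one_le_exp (p / (1 - p))
  have h2 : (1 - p)⁻¹ ≤ Real.exp (p / (1 - p)) := by
    have he : p / (1 - p) + 1 = (1 - p)⁻¹ := by field_simp; ring
    linarith
  rw [Real.exp_neg, inv_le_comm₀ (Real.exp_pos _) hq]
  exact h2

lemma a_lower (n : ℕ) (ε' : ℝ) (hε0 : 0 < ε') (hε1 : ε' ≤ 1 / 2) (p : ℝ)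
    (hn : 2 ≤ n) (hp0 : 0 ≤ p) (hpd : p ≤ ε' / 4)
    (hnp : (n : ℝ) * p ≤ (1 - ε') * Real.log n) :
    (n : ℝ) ^ (ε' / 2 : ℝ) ≤ (n : ℝ) * (1 - p) ^ (n - 1) := by
  have hn0 : (0 : ℝ) < n := by
    have : (0 : ℕ) < n := by omega
    exact_mod_cast this
  have hp1 : p < 1 := by linarith
  have hq : 0 < 1 - p := by linarith
  have hlog : 0 ≤ Real.log n := Real.log_nonneg (by exact_mod_cast Nat.one_le_of_lt hn)
  set x := p / (1 - p) with hx
  have hx0 : 0 ≤ x := div_nonneg hp0 hq.le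
  have step1 : Real.exp (-x) ≤ 1 - p := one_sub_ge_exp p hp0 hp1
  have step2 : Real.exp (-(((n - 1 : ℕ) : ℝ) * x)) ≤ (1 - p) ^ (n - 1) := by
    calc Real.exp (-(((n - 1 : ℕ) : ℝ) * x)) = Real.exp (-x) ^ (n - 1) := by
          rw [← Real.exp_nat_mul]
          congr 1
          ring
      _ ≤ (1 - p) ^ (n - 1) := pow_le_pow_left₀ (Real.exp_pos _).le step1 _
  have step3 : ((n - 1 : ℕ) : ℝ) * x ≤ (1 - ε' / 2) * Real.log n := by
    have hc : ((n - 1 : ℕ) : ℝ) ≤ (n : ℝ) := by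
      exact_mod_cast Nat.sub_le n 1
    have h1 : ((n - 1 : ℕ) : ℝ) * x ≤ (n : ℝ) * x := mul_le_mul_of_nonneg_right hc hx0
    have h2 : (n : ℝ) * x = ((n : ℝ) * p) / (1 - p) := by rw [hx]; ring
    have h3 : ((n : ℝ) * p) / (1 - p) ≤ ((1 - ε') * Real.log n) / (1 - p) := by
      apply div_le_div_of_nonneg_right hnp hq.le
    have h4 : ((1 - ε') * Real.log n) / (1 - p) ≤ ((1 - ε') * Real.log n) / (1 - ε' / 4) := by
      apply div_le_div_of_nonneg_left _ (by linarith) (by linarith)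
      have : (0:ℝ) ≤ 1 - ε' := by linarith
      positivity
    have h5 : ((1 - ε') * Real.log n) / (1 - ε' / 4) ≤ (1 - ε' / 2) * Real.log n := by
      rw [div_le_iff₀ (by linarith)]
      nlinarith [mul_nonneg hlog hε0.le, mul_nonneg (mul_nonneg hlog hε0.le) hε0.le]
    linarith
  calc (n : ℝ) ^ (ε' / 2 : ℝ)
      = (n : ℝ) * Real.exp (-((1 - ε' / 2) * Real.log n)) := by
        have hrw : (n : ℝ) * Real.exp (-((1 - ε' / 2) * Real.log n))
            = Real.exp (Real.log n + -((1 - ε' / 2) * Real.log n)) := by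
          rw [Real.exp_add, Real.exp_log hn0]
        rw [Real.rpow_def_of_pos hn0, hrw]
        congr 1
        ring
    _ ≤ (n : ℝ) * (1 - p) ^ (n - 1) := by
        apply mul_le_mul_of_nonneg_left _ hn0.le
        refine le_trans ?_ step2
        apply Real.exp_le_exp.mpr
        linarith

/-- If `n·p(n) ≤ (1−ε)·log n` for all large `n`, then with probability tending to `1`,
the Erdős–Rényi graph `G(n, p(n))` contains an isolated vertex, and in particular is
not connected, with probability tending to `1`. -/
theorem stmt_0 (ε : ℝ) (hε : 0 < ε) (p : ℕ → ℝ)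
    (hp : ∀ n, p n ∈ Set.Icc (0 : ℝ) 1)
    (h : ∀ᶠ (n : ℕ) in Filter.atTop, (n : ℝ) * p n ≤ (1 - ε) * Real.log n) :
    Filter.Tendsto
      (fun n => erProb n (p n) {g : SimpleGraph (Fin n) | ∃ v, ∀ w, ¬ g.Adj v w})
      Filter.atTop (nhds 1)
    ∧ Filter.Tendsto
      (fun n => erProb n (p n) {g : SimpleGraph (Fin n) | ¬ g.Connected})
      Filter.atTop (nhds 1) := by
  classical
  have hp0 : ∀ n, 0 ≤ p n := fun n => (hp n).1
  have hp1 : ∀ n, p n ≤ 1 := fun n => (hp n).2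
  set ε' := min ε (1 / 2 : ℝ) with hε'def
  have hε'0 : 0 < ε' := lt_min hε (by norm_num)
  have hε'1 : ε' ≤ 1 / 2 := min_le_right _ _
  have hlogdiv : Filter.Tendsto (fun n : ℕ => Real.log n / n) Filter.atTop (nhds 0) := by
    have := (Real.tendsto_pow_log_div_mul_add_atTop 1 0 1 one_ne_zero).comp
      tendsto_natCast_atTop_atTop
    simpa [Function.comp_def] using this
  have hn2 : ∀ᶠ n : ℕ in Filter.atTop, 2 ≤ n :=
    Filter.eventually_atTop.mpr ⟨2, fun n hn => hn⟩
  have hnp' : ∀ᶠ n : ℕ in Filter.atTop, (n : ℝ) * p n ≤ (1 - ε') * Real.log n := by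
    filter_upwards [h, hn2] with n hn h2
    have hlog : 0 ≤ Real.log n := Real.log_nonneg (by exact_mod_cast Nat.one_le_of_lt h2)
    have hee : ε' ≤ ε := min_le_left _ _
    nlinarith
  have hplog : ∀ᶠ n : ℕ in Filter.atTop, p n ≤ Real.log n / n := by
    filter_upwards [hnp', hn2] with n hnp h2
    have hn0 : (0 : ℝ) < n := by exact_mod_cast (by omega : 0 < n)
    have hlog : 0 ≤ Real.log n := Real.log_nonneg (by exact_mod_cast Nat.one_le_of_lt h2)
    rw [le_div_iff₀ hn0]
    nlinarith
  have hpsmall : ∀ᶠ n : ℕ in Filter.atTop, p n ≤ ε' / 4 := by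
    have hev := hlogdiv.eventually (gt_mem_nhds (show (0 : ℝ) < ε' / 4 by positivity))
    filter_upwards [hplog, hev] with n h1 h2
    linarith
  have hptend : Filter.Tendsto p Filter.atTop (nhds 0) :=
    tendsto_of_tendsto_of_tendsto_of_le_of_le' tendsto_const_nhds hlogdiv
      (Filter.Eventually.of_forall fun n => hp0 n) hplog
  have ha_low : ∀ᶠ n : ℕ in Filter.atTop,
      (n : ℝ) ^ (ε' / 2 : ℝ) ≤ (n : ℝ) * (1 - p n) ^ (n - 1) := by
    filter_upwards [hn2, hpsmall, hnp'] with n h2 hsm hnp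
    exact a_lower n ε' hε'0 hε'1 (p n) h2 (hp0 n) hsm hnp
  have ha_top : Filter.Tendsto (fun n : ℕ => (n : ℝ) * (1 - p n) ^ (n - 1))
      Filter.atTop Filter.atTop := by
    apply Filter.tendsto_atTop_mono' _ ha_low
    exact (tendsto_rpow_atTop (by positivity)).comp tendsto_natCast_atTop_atTop
  have hinva : Filter.Tendsto (fun n : ℕ => ((n : ℝ) * (1 - p n) ^ (n - 1))⁻¹)
      Filter.atTop (nhds 0) := ha_top.inv_tendsto_atTop
  have hqtend : Filter.Tendsto (fun n : ℕ => 1 - p n) Filter.atTop (nhds 1) := by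
    have h10 : Filter.Tendsto (fun n : ℕ => (1 : ℝ) - p n) Filter.atTop (nhds ((1 : ℝ) - 0)) :=
      Filter.Tendsto.sub tendsto_const_nhds hptend
    simpa using h10
  have hinvq : Filter.Tendsto (fun n : ℕ => (1 - p n)⁻¹) Filter.atTop (nhds 1) := by
    have := hqtend.inv₀ one_ne_zero
    simpa using this
  have hLtend : Filter.Tendsto
      (fun n : ℕ => (((n : ℝ) * (1 - p n) ^ (n - 1))⁻¹ + (1 - p n)⁻¹)⁻¹)
      Filter.atTop (nhds 1) := by
    have := (hinva.add hinvq).inv₀ (by norm_num)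
    simpa using this
  have hmain : ∀ᶠ n : ℕ in Filter.atTop,
      (((n : ℝ) * (1 - p n) ^ (n - 1))⁻¹ + (1 - p n)⁻¹)⁻¹
        ≤ erProb n (p n) {g : SimpleGraph (Fin n) | ∃ v, ∀ w, ¬ g.Adj v w} := by
    filter_upwards [hn2, hpsmall] with n h2 hsm
    have hpn1 : p n < 1 := lt_of_le_of_lt hsm (by linarith)
    have hq : 0 < 1 - p n := by linarith
    have hn0 : (0 : ℝ) < n := by exact_mod_cast (by omega : 0 < n)
    set q := 1 - p n with hqdef
    set A := (n : ℝ) * q ^ (n - 1) with hAdef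
    have hA0 : 0 < A := mul_pos hn0 (pow_pos hq _)
    set P := erProb n (p n) {g : SimpleGraph (Fin n) | ∃ v, ∀ w, ¬ g.Adj v w} with hPdef
    have hP0 : 0 ≤ P := ERAux.erProb_nonneg n (p n) (hp0 n) (hp1 n) _
    have hcs := ERAux.prob_iso_lower n (p n) h2 (hp0 n) (hp1 n)
    have hsq : (n : ℝ) ^ 2 * q ^ (2 * n - 3) = A ^ 2 / q := by
      rw [eq_div_iff hq.ne']
      have hqe : q ^ (2 * n - 3) * q = (q ^ (n - 1)) ^ 2 := by
        rw [← pow_succ, ← pow_mul]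
        congr 1
        omega
      calc (n : ℝ) ^ 2 * q ^ (2 * n - 3) * q = (n : ℝ) ^ 2 * (q ^ (2 * n - 3) * q) := by ring
        _ = (n : ℝ) ^ 2 * (q ^ (n - 1)) ^ 2 := by rw [hqe]
        _ = A ^ 2 := by rw [hAdef]; ring
    have hkey : A ^ 2 ≤ P * (A + A ^ 2 / q) := by
      rw [← hsq]
      exact hcs
    have hD : 0 < A + A ^ 2 / q := by positivity
    have hPge : A ^ 2 / (A + A ^ 2 / q) ≤ P := (div_le_iff₀ hD).mpr (by linarith [hkey])
    have hLeq : (A⁻¹ + q⁻¹)⁻¹ = A ^ 2 / (A + A ^ 2 / q) := by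
      field_simp
    rw [hLeq]
    exact hPge
  have hub : ∀ n : ℕ, erProb n (p n)
      {g : SimpleGraph (Fin n) | ∃ v, ∀ w, ¬ g.Adj v w} ≤ 1 :=
    fun n => ERAux.erProb_le_one n (p n) (hp0 n) (hp1 n) _
  have hub2 : ∀ n : ℕ, erProb n (p n)
      {g : SimpleGraph (Fin n) | ¬ g.Connected} ≤ 1 :=
    fun n => ERAux.erProb_le_one n (p n) (hp0 n) (hp1 n) _
  constructor
  · exact tendsto_of_tendsto_of_tendsto_of_le_of_le' hLtend tendsto_const_nhds hmain
      (Filter.Eventually.of_forall hub)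
  · apply tendsto_of_tendsto_of_tendsto_of_le_of_le' hLtend tendsto_const_nhds
    · filter_upwards [hmain, hn2] with n hm h2
      exact le_trans hm (ERAux.erProb_mono n (p n) (hp0 n) (hp1 n)
        (ERAux.iso_subset_notconn n h2))
    · exact Filter.Eventually.of_forall hub2
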